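/- (Lemma 5.4, per homogeneous type.) Suppose 0 < ε < −μ/(d+1). Let i ∈ {1,…,ℓ} and s ∈ ℕ^ℓ be such that χ_i < Σ_{j=1}^ℓ s_j χ_j (a strict sub-resonance type, i.e., satisfying the sub-resonance relation but not the resonance relation), and let Q : E → E_i have homogeneous type s with ‖Q(v)‖ ≤ C for all v ∈ E with ‖v‖ ≤ 1. Then μ + (d+1)ε < 0, and for every w ∈ E' with ‖w‖ ≤ 1, ‖F_i(Q(F^{-1}(w)))‖ ≤ e^{μ + (d+1)ε} · C, a bound strictly smaller than C whenever C > 0. -/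

import Mathlib

/-- A map `R` from a product of real vector spaces to a real vector space has
homogeneous type `s = (s 0, …, s (ℓ-1))` if scaling the `j`-th component by `a j`
multiplies the value by `∏ j, (a j) ^ (s j)`. -/
def HomogType {ℓ : ℕ} {E : Fin ℓ → Type*} [∀ j, AddCommGroup (E j)] [∀ j, Module ℝ (E j)]
    {V : Type*} [AddCommGroup V] [Module ℝ V]
    (s : Fin ℓ → ℕ) (R : (∀ j, E j) → V) : Prop :=
  ∀ (a : Fin ℓ → ℝ) (w : ∀ j, E j), R (fun j => a j • w j) = (∏ j, a j ^ s j) • R w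

/-- Lemma 5.4 per homogeneous type: if `0 < ε < -μ/(d+1)` and `(i, s)` is a strict
sub-resonance type, then `μ + (d+1) ε < 0` and the conjugation `Fᵢ ∘ Q ∘ F⁻¹` of a map of
homogeneous type `s` bounded by `C` on the unit ball is bounded by `e^{μ + (d+1) ε} C < C`. -/
theorem inv_conj_contracts_strict_subresonance
    {ℓ : ℕ} (χ : Fin (ℓ + 1) → ℝ) (hmono : StrictMono χ) (hneg : ∀ j, χ j < 0)
    (E E' : Fin (ℓ + 1) → Type*)
    [∀ j, NormedAddCommGroup (E j)] [∀ j, NormedSpace ℝ (E j)]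
    [∀ j, NormedAddCommGroup (E' j)] [∀ j, NormedSpace ℝ (E' j)]
    (d : ℤ) (hd : d = ⌊χ 0 / χ (Fin.last ℓ)⌋)
    (μ : ℝ)
    (hμ : IsGreatest {x : ℝ | x < 0 ∧ ∃ (i : Fin (ℓ + 1)) (s : Fin (ℓ + 1) → ℕ),
      χ i ≤ ∑ j, (s j : ℝ) * χ j ∧ x = χ i - ∑ j, (s j : ℝ) * χ j} μ)
    (ε : ℝ) (hε : 0 < ε) (hε' : ε < -μ / ((d : ℝ) + 1))
    (F : ∀ j, E j ≃ₗ[ℝ] E' j)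
    (hF : ∀ j, ∀ u : E j,
      Real.exp (χ j - ε) * ‖u‖ ≤ ‖F j u‖ ∧ ‖F j u‖ ≤ Real.exp (χ j + ε) * ‖u‖)
    (i : Fin (ℓ + 1)) (s : Fin (ℓ + 1) → ℕ)
    (hss : χ i < ∑ j, (s j : ℝ) * χ j)
    (Q : PiLp 2 E → E i) (hQ : HomogType s (fun v => Q (WithLp.toLp 2 v)))
    (C : ℝ) (hC : ∀ v : PiLp 2 E, ‖v‖ ≤ 1 → ‖Q v‖ ≤ C) :
    μ + ((d : ℝ) + 1) * ε < 0 ∧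
      (∀ w : PiLp 2 E', ‖w‖ ≤ 1 →
        ‖F i (Q (WithLp.toLp 2 (fun j => (F j).symm (w j))))‖ ≤ Real.exp (μ + ((d : ℝ) + 1) * ε) * C) ∧
      (0 < C → Real.exp (μ + ((d : ℝ) + 1) * ε) * C < C) := by
  have hμ0 : μ < 0 := hμ.1.1
  have hχlast : χ (Fin.last ℓ) < 0 := hneg _
  have hxμ : χ i - ∑ j, (s j : ℝ) * χ j ≤ μ :=
    hμ.2 ⟨by linarith, i, s, le_of_lt hss, rfl⟩
  -- d ≥ 1
  have hd1 : (1 : ℤ) ≤ d := by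
    rw [hd, Int.le_floor]
    rw [le_div_iff_of_neg hχlast]
    push_cast
    rw [one_mul]
    exact hmono.monotone (Fin.zero_le _)
  -- n ≤ d
  have hsum_le : (∑ j, (s j : ℝ) * χ j) ≤ (∑ j, (s j : ℝ)) * χ (Fin.last ℓ) := by
    rw [Finset.sum_mul]
    apply Finset.sum_le_sum
    intro j _
    exact mul_le_mul_of_nonneg_left (hmono.monotone (Fin.le_last j)) (Nat.cast_nonneg _)
  have hnd : (∑ j, (s j : ℝ)) ≤ (d : ℝ) := by
    have h1 : χ 0 < (∑ j, (s j : ℝ)) * χ (Fin.last ℓ) :=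
      lt_of_le_of_lt (hmono.monotone (Fin.zero_le i)) (lt_of_lt_of_le hss hsum_le)
    have h2 : (∑ j, (s j : ℝ)) ≤ χ 0 / χ (Fin.last ℓ) := by
      rw [le_div_iff_of_neg hχlast]
      linarith
    have h3 : ((∑ j, s j : ℕ) : ℤ) ≤ d := by
      rw [hd, Int.le_floor]
      push_cast
      push_cast at h2
      linarith
    exact_mod_cast h3
  have hdpos : (0 : ℝ) < (d : ℝ) + 1 := by
    have : (1 : ℝ) ≤ (d : ℝ) := by exact_mod_cast hd1
    linarith
  have hmain : μ + ((d : ℝ) + 1) * ε < 0 := by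
    rw [lt_div_iff₀ hdpos] at hε'
    linarith
  have hCnn : 0 ≤ C := le_trans (norm_nonneg _) (hC 0 (by simp))
  refine ⟨hmain, ?_, fun hCpos => ?_⟩
  · intro w hw
    set v : PiLp 2 E := WithLp.toLp 2 (fun j => Real.exp (χ j - ε) • (F j).symm (w j)) with hv
    have hvj : ∀ j, ‖v j‖ ≤ ‖w j‖ := by
      intro j
      have h1 := (hF j ((F j).symm (w j))).1
      rw [LinearEquiv.apply_symm_apply] at h1
      calc ‖v j‖ = Real.exp (χ j - ε) * ‖(F j).symm (w j)‖ := by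
            simp [hv, norm_smul, abs_of_pos (Real.exp_pos _)]
        _ ≤ ‖w j‖ := h1
    have hvnorm : ‖v‖ ≤ ‖w‖ := by
      rw [PiLp.norm_eq_sum (by norm_num), PiLp.norm_eq_sum (by norm_num)]
      apply Real.rpow_le_rpow (by positivity) _ (by positivity)
      apply Finset.sum_le_sum
      intro j _
      exact Real.rpow_le_rpow (norm_nonneg _) (hvj j) (by positivity)
    have hkey : (fun j => (F j).symm (w j)) = fun j => Real.exp (ε - χ j) • v j := by
      funext j
      rw [hv]
      simp only [PiLp.toLp_apply, smul_smul, ← Real.exp_add]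
      norm_num
    have hQv : Q (WithLp.toLp 2 (fun j => (F j).symm (w j))) =
        (∏ j, Real.exp (ε - χ j) ^ s j) • Q v := by
      rw [hkey]; exact hQ _ v.ofLp
    have hprod : (∏ j, Real.exp (ε - χ j) ^ s j)
        = Real.exp (∑ j, (s j : ℝ) * (ε - χ j)) := by
      rw [Real.exp_sum]
      apply Finset.prod_congr rfl
      intro j _
      rw [← Real.exp_nat_mul]
    have hQvnorm : ‖Q v‖ ≤ C := hC v (hvnorm.trans hw)
    have hexp : χ i + ε + ∑ j, (s j : ℝ) * (ε - χ j) ≤ μ + ((d : ℝ) + 1) * ε := by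
      have : ∑ j, (s j : ℝ) * (ε - χ j)
          = (∑ j, (s j : ℝ)) * ε - ∑ j, (s j : ℝ) * χ j := by
        rw [Finset.sum_mul, ← Finset.sum_sub_distrib]
        apply Finset.sum_congr rfl
        intro j _; ring
      rw [this]
      nlinarith [hε.le, hnd]
    calc ‖F i (Q (WithLp.toLp 2 fun j => (F j).symm (w j)))‖
        ≤ Real.exp (χ i + ε) * ‖Q (WithLp.toLp 2 fun j => (F j).symm (w j))‖ := (hF i _).2
      _ = Real.exp (χ i + ε) * (Real.exp (∑ j, (s j : ℝ) * (ε - χ j)) * ‖Q v‖) := by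
          rw [hQv, hprod, norm_smul, Real.norm_eq_abs, abs_of_pos (Real.exp_pos _)]
      _ ≤ Real.exp (χ i + ε) * (Real.exp (∑ j, (s j : ℝ) * (ε - χ j)) * C) := by
          apply mul_le_mul_of_nonneg_left _ (Real.exp_pos _).le
          exact mul_le_mul_of_nonneg_left hQvnorm (Real.exp_pos _).le
      _ = Real.exp (χ i + ε + ∑ j, (s j : ℝ) * (ε - χ j)) * C := by
          rw [← mul_assoc, ← Real.exp_add]
      _ ≤ Real.exp (μ + ((d : ℝ) + 1) * ε) * C :=
          mul_le_mul_of_nonneg_right (Real.exp_le_exp.mpr hexp) hCnn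
  · have : Real.exp (μ + ((d : ℝ) + 1) * ε) < 1 := Real.exp_lt_one_iff.mpr hmain
    nlinarith
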